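/- Let p : X̃ → X be a universal covering of a path connected, locally path connected space X. Then the induced map p_* : Π(X̃) → Π(X), [c̃] ↦ [p∘c̃], between topological fundamental groupoids is a covering map. -/

import Mathlib

open unitInterval

/-- Homotopy rel endpoints between two continuous paths `[0,1] → X`. -/
def PathHomotopicRel {X : Type*} [TopologicalSpace X] (c c' : C(I, X)) : Prop :=
  c 0 = c' 0 ∧ c 1 = c' 1 ∧
    ∃ H : C(I × I, X),
      (∀ t, H (0, t) = c t) ∧ (∀ t, H (1, t) = c' t) ∧
      (∀ s, H (s, 0) = c 0) ∧ (∀ s, H (s, 1) = c 1)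

/-- The topological fundamental groupoid: homotopy classes rel endpoints of paths,
with the quotient of the compact-open topology. -/
abbrev FundGroupoidSpace (X : Type*) [TopologicalSpace X] : Type _ :=
  Quot (PathHomotopicRel (X := X))

/-- The start/endpoint map `(s,e) : Π(X) → X × X`. -/
def startEndMap {X : Type*} [TopologicalSpace X] : FundGroupoidSpace X → X × X :=
  Quot.lift (fun c => (c 0, c 1)) fun _ _ h => Prod.ext h.1 h.2.1

/-- `X` is semilocally simply connected: every point has a neighborhood all of whose
loops are null-homotopic in `X`. -/
def SemilocSimplyConnected (X : Type*) [TopologicalSpace X] : Prop :=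
  ∀ x : X, ∃ U ∈ nhds x, ∀ c : C(I, X), (∀ t, c t ∈ U) → c 1 = c 0 →
    PathHomotopicRel c (ContinuousMap.const I (c 0))


/-- The map on topological fundamental groupoids induced by a continuous map. -/
def pushQuot {X Y : Type*} [TopologicalSpace X] [TopologicalSpace Y] (f : C(X, Y)) :
    FundGroupoidSpace X → FundGroupoidSpace Y :=
  Quot.map (fun c => f.comp c) fun a b h => by
    obtain ⟨h0, h1, H, hH0, hH1, hHs0, hHs1⟩ := h
    refine ⟨by simp [h0], by simp [h1], f.comp H, ?_, ?_, ?_, ?_⟩ <;>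
      intro t <;> simp [hH0, hH1, hHs0, hHs1]


section Aux

open Set Metric

variable {X X' : Type*} [TopologicalSpace X] [TopologicalSpace X'] {p : X' → X}

theorem hlp_induct {Y : Type*} [TopologicalSpace Y] (hp : IsCoveringMap p)
    (f : Y × ℝ → X) (hf : Continuous f)
    (g : Y → X') (hg : Continuous g) (hpg : ∀ y s, s ≤ 0 → p (g y) = f (y, s))
    (n : ℕ) (hn0 : 0 < (n : ℝ)) (N₀ : Set Y)
    (Z : ℕ → Type*) [∀ k, TopologicalSpace (Z k)] (ek : ∀ k, Bundle.Trivialization (Z k) p)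
    (hbase : ∀ k : ℕ, k < n → ∀ y ∈ N₀, ∀ s ∈ Icc ((k : ℝ)/n) (((k : ℝ)+1)/n),
      f (y, s) ∈ (ek k).baseSet) :
    ∀ k : ℕ, k ≤ n → ∃ F : Y × ℝ → X',
      ContinuousOn F (N₀ ×ˢ univ) ∧ (∀ y ∈ N₀, ∀ s ≤ (k:ℝ)/n, p (F (y, s)) = f (y, s)) ∧
      ∀ y ∈ N₀, F (y, 0) = g y := by
  intro k
  induction k with
  | zero =>
    intro _
    exact ⟨fun z => g z.1, (hg.comp continuous_fst).continuousOn,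
      fun y hy s hs => show p (g y) = f (y, s) from hpg y s (by simpa using hs),
      fun y hy => rfl⟩
  | succ k ih =>
    intro hk
    obtain ⟨F, hFc, hFp, hF0⟩ := ih (Nat.le_of_succ_le hk)
    have hkn : k < n := hk
    set tk : ℝ := (k : ℝ)/n with htk
    set tk1 : ℝ := ((k : ℝ)+1)/n with htk1
    have htkk : tk ≤ tk1 := by
      rw [htk, htk1]; gcongr <;> linarith
    have htk0 : 0 ≤ tk := by positivity
    have hb : ∀ y ∈ N₀, ∀ s ∈ Icc tk tk1, f (y, s) ∈ (ek k).baseSet :=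
      hbase k hkn
    set E := ek k with hE
    -- membership facts
    have hmemsrc : ∀ y ∈ N₀, F (y, tk) ∈ E.source := by
      intro y hy
      rw [E.mem_source, hFp y hy tk le_rfl]
      exact hb y hy tk ⟨le_rfl, htkk⟩
    set clamp : ℝ → ℝ := fun s => max tk (min s tk1) with hclampdef
    have hclamp : ∀ s, clamp s ∈ Icc tk tk1 := fun s =>
      ⟨le_max_left _ _, max_le htkk (min_le_right _ _)⟩
    have hclampc : Continuous clamp := continuous_const.max (continuous_id.min continuous_const)
    set G : Y × ℝ → X' :=
      fun z => E.toOpenPartialHomeomorph.symm (f (z.1, clamp z.2), (E (F (z.1, tk))).2) with hG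
    have hmemtgt : ∀ y ∈ N₀, ∀ s : ℝ, (f (y, clamp s), (E (F (y, tk))).2) ∈ E.target := by
      intro y hy s
      rw [E.mem_target]
      exact hb y hy _ (hclamp s)
    -- continuity of G on N₀ ×ˢ univ
    have cF : ContinuousOn (fun z : Y × ℝ => F (z.1, tk)) (N₀ ×ˢ univ) := by
      apply hFc.comp (Continuous.continuousOn (by fun_prop))
      exact fun z hz => ⟨hz.1, mem_univ _⟩
    have cSheet : ContinuousOn (fun z : Y × ℝ => (E (F (z.1, tk))).2) (N₀ ×ˢ univ) := by
      apply continuous_snd.comp_continuousOn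
      exact (E.toOpenPartialHomeomorph.continuousOn).comp cF fun z hz => hmemsrc z.1 hz.1
    have cPair : ContinuousOn
        (fun z : Y × ℝ => ((f (z.1, clamp z.2), (E (F (z.1, tk))).2) : X × Z k))
        (N₀ ×ˢ univ) := by
      apply ContinuousOn.prodMk ?_ cSheet
      exact (hf.comp (continuous_fst.prodMk (hclampc.comp continuous_snd))).continuousOn
    have cG : ContinuousOn G (N₀ ×ˢ univ) := by
      apply (E.toOpenPartialHomeomorph.symm.continuousOn).comp cPair
      intro z hz
      exact hmemtgt z.1 hz.1 z.2
    -- boundary agreement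
    have hbdry : ∀ y ∈ N₀, F (y, tk) = G (y, tk) := by
      intro y hy
      have h1 : clamp tk = tk := by
        rw [hclampdef]
        simp [min_eq_left htkk]
      have h2 : f (y, clamp tk) = (E (F (y, tk))).1 := by
        rw [h1, E.coe_fst (hmemsrc y hy), hFp y hy tk le_rfl]
      have : ((f (y, clamp tk), (E (F (y, tk))).2) : X × Z k) = E (F (y, tk)) :=
        Prod.ext h2 rfl
      rw [hG]
      simp only [this]
      exact (E.toOpenPartialHomeomorph.left_inv (hmemsrc y hy)).symm
    -- glue
    refine ⟨fun z => if z.2 ≤ tk then F z else G z, ?_, ?_, ?_⟩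
    · rw [continuousOn_iff_continuous_restrict] at hFc cG ⊢
      have : domRestrict (N₀ ×ˢ univ) (fun z => if z.2 ≤ tk then F z else G z)
          = fun w : ↥(N₀ ×ˢ univ) =>
              if (w.1.2) ≤ tk then domRestrict (N₀ ×ˢ univ) F w else domRestrict (N₀ ×ˢ univ) G w := by
        funext w; by_cases h : w.1.2 ≤ tk <;> simp [domRestrict, h]
      rw [this]
      exact Continuous.if_le hFc cG (continuous_subtype_val.snd) continuous_const
        fun w hw => by
          simp only [domRestrict_apply]
          rw [show (w.1 : Y × ℝ) = (w.1.1, tk) from Prod.ext rfl hw, hbdry w.1.1 w.2.1]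
    · intro y hy s hs
      by_cases h : s ≤ tk
      · simpa [h] using hFp y hy s h
      · push_neg at h
        have hcl : clamp s = s := by
          rw [hclampdef]
          have h2 : s ≤ tk1 := by
            rw [htk1]; push_cast at hs ⊢; exact hs
          simp [min_eq_left h2, max_eq_right h.le]
        simp only [h.not_ge, if_false]
        rw [hG]
        have := E.proj_symm_apply (hmemtgt y hy s)
        simp only at this
        rw [this, hcl]
    · intro y hy
      simp only [htk0, if_pos]
      exact hF0 y hy



theorem range_isClosed_of_cov (hp : IsCoveringMap p) : IsClosed (range p) := by
  rw [← isOpen_compl_iff, isOpen_iff_forall_mem_open]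
  intro x hx
  obtain ⟨_, U, hxU, hU, _, H, _⟩ := hp x
  refine ⟨U, ?_, hU, hxU⟩
  rintro y hyU ⟨e, rfl⟩
  exact hx ⟨(H ⟨e, hyU⟩).2.1, (H ⟨e, hyU⟩).2.2⟩

theorem hlp_local (hp : IsCoveringMap p) {Y : Type*} [TopologicalSpace Y]
    (f : Y × ℝ → X) (hf : Continuous f)
    (hf1 : ∀ y s, 1 ≤ s → f (y, s) = f (y, 1))
    (g : Y → X') (hg : Continuous g) (hpg : ∀ y s, s ≤ 0 → p (g y) = f (y, s)) (y₀ : Y) :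
    ∃ N : Set Y, IsOpen N ∧ y₀ ∈ N ∧ ∃ F : Y × ℝ → X',
      ContinuousOn F (N ×ˢ univ) ∧ (∀ y ∈ N, ∀ s, p (F (y, s)) = f (y, s)) ∧
      ∀ y ∈ N, F (y, 0) = g y := by
  -- local even coverings along the fiber over y₀
  have hev : ∀ r : ℝ, ∃ (N : Set Y) (a : ℝ),
      IsOpen N ∧ y₀ ∈ N ∧ 0 < a ∧
      ∃ e : Bundle.Trivialization (p ⁻¹' {f (y₀, r)}) p,
        ∀ y ∈ N, ∀ s : ℝ, |s - r| < a → f (y, s) ∈ e.baseSet := by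
    intro r
    have hmem : f (y₀, r) ∈ range p := by
      have hcl : IsClopen ((fun s : ℝ => f (y₀, s)) ⁻¹' range p) :=
        ⟨(range_isClosed_of_cov hp).preimage (hf.comp (continuous_const.prodMk continuous_id)),
          hp.isOpenMap.isOpen_range.preimage (hf.comp (continuous_const.prodMk continuous_id))⟩
      have hu := (isClopen_iff.mp hcl).resolve_left
        (Set.nonempty_iff_ne_empty.mp ⟨0, g y₀, hpg y₀ 0 le_rfl⟩)
      have hr : r ∈ (fun s : ℝ => f (y₀, s)) ⁻¹' range p := hu ▸ mem_univ r
      exact hr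
    obtain ⟨x', hx'⟩ := hmem
    haveI : Nonempty (p ⁻¹' {f (y₀, r)}) := ⟨⟨x', hx'⟩⟩
    have hcov := hp (f (y₀, r))
    have hb := hcov.mem_toTrivialization_baseSet
    set e := hcov.toTrivialization with he
    have hO : IsOpen (f ⁻¹' e.baseSet) := e.open_baseSet.preimage hf
    obtain ⟨u, v, hu, hv, hyu, hrv, huv⟩ := isOpen_prod_iff.mp hO y₀ r hb
    obtain ⟨a, ha, hball⟩ := Metric.isOpen_iff.mp hv r hrv
    refine ⟨u, a, hu, hyu, ha, e, fun y hy s hs => ?_⟩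
    have : (y, s) ∈ u ×ˢ v := ⟨hy, hball (by simpa [Real.dist_eq] using hs)⟩
    exact huv this
  choose N a hNo hNm ha e he using hev
  -- Lebesgue number for the cover of [0,1]
  obtain ⟨δ, hδ, hball⟩ := lebesgue_number_lemma_of_metric (isCompact_Icc (a := (0:ℝ)) (b := 1))
    (fun r : Icc (0:ℝ) 1 => isOpen_ball (x := r.1) (ε := a r.1))
    (fun x hx => mem_iUnion.2 ⟨⟨x, hx⟩, mem_ball_self (ha x)⟩)
  obtain ⟨n, hn⟩ := exists_nat_gt (1 / δ)
  have hn0 : 0 < (n : ℝ) := lt_trans (by positivity) hn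
  have hδn : 1 / (n : ℝ) < δ := by
    rw [div_lt_iff₀ hn0]
    calc (1:ℝ) = (1/δ) * δ := by field_simp
    _ < n * δ := by exact mul_lt_mul_of_pos_right hn hδ
    _ = δ * n := mul_comm _ _
  -- for every k, a good trivialization over f(N × [k/n, (k+1)/n])
  have key : ∀ k : ℕ, ∃ r : ℝ, y₀ ∈ N r ∧
      ∀ y ∈ N r, ∀ s ∈ Icc ((k : ℝ)/n) (((k : ℝ)+1)/n), f (y, s) ∈ (e r).baseSet := by
    intro k
    by_cases hk : (k : ℝ)/n < 1
    · have hxK : (k : ℝ)/n ∈ Icc (0:ℝ) 1 := ⟨by positivity, hk.le⟩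
      obtain ⟨r, hr⟩ := hball _ hxK
      refine ⟨r.1, hNm r.1, fun y hy s hs => ?_⟩
      have hsr : s ∈ ball (r : ℝ) (a r.1) := hr (by
        have h1 : (k : ℝ)/n ≤ s := hs.1
        have h2 : s ≤ ((k : ℝ)+1)/n := hs.2
        have : |s - (k : ℝ)/n| < δ := by
          rw [abs_sub_lt_iff]
          constructor
          · have : s - (k:ℝ)/n ≤ 1/n := by
              rw [sub_le_iff_le_add]
              calc s ≤ ((k:ℝ)+1)/n := h2
              _ = 1/n + (k:ℝ)/n := by ring
            linarith
          · linarith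
        simpa [Real.dist_eq] using this)
      exact he r.1 y hy s (by simpa [Real.dist_eq] using mem_ball.mp hsr)
    · push_neg at hk
      refine ⟨1, hNm 1, fun y hy s hs => ?_⟩
      have h1s : (1:ℝ) ≤ s := le_trans hk hs.1
      have : f (y, s) = f (y, 1) := hf1 y s h1s
      rw [this]
      exact he 1 y hy 1 (by simpa using ha 1)
  choose r hr₀ hr₂ using key
  set N₀ : Set Y := ⋂ k ∈ Finset.range (n+1), N (r k) with hN₀
  have hN₀o : IsOpen N₀ := isOpen_biInter_finset fun k _ => hNo (r k)
  have hN₀m : y₀ ∈ N₀ := mem_iInter₂.2 fun k _ => hr₀ k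
  have hN₀sub : ∀ k : ℕ, k ≤ n → N₀ ⊆ N (r k) := fun k hk =>
    biInter_subset_of_mem (Finset.mem_range.2 (Nat.lt_succ_of_le hk))
  obtain ⟨F, hFc, hFp, hF0⟩ := hlp_induct hp f hf g hg hpg n hn0 N₀
    (fun k => ↥(p ⁻¹' {f (y₀, r k)})) (fun k => e (r k))
    (fun k hk y hy s hs => hr₂ k y (hN₀sub k hk.le hy) s hs) n le_rfl
  have hnn : (n : ℝ)/n = 1 := div_self hn0.ne'
  refine ⟨N₀, hN₀o, hN₀m, fun z => F (z.1, min z.2 1), ?_, ?_, ?_⟩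
  · apply hFc.comp (Continuous.continuousOn (by fun_prop))
    exact fun z hz => ⟨hz.1, mem_univ _⟩
  · intro y hy s
    show p (F (y, min s 1)) = f (y, s)
    by_cases h : s ≤ 1
    · rw [min_eq_left h]
      exact hFp y hy s (by rw [hnn]; exact h)
    · push_neg at h
      rw [min_eq_right h.le, hFp y hy 1 (by rw [hnn]), hf1 y s h.le]
  · intro y hy
    show F (y, min 0 1) = g y
    rw [min_eq_left zero_le_one]
    exact hF0 y hy


theorem hlp (hp : IsCoveringMap p) {Y : Type*} [TopologicalSpace Y]
    (f : Y × ℝ → X) (hf : Continuous f)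
    (hf1 : ∀ y s, 1 ≤ s → f (y, s) = f (y, 1))
    (g : Y → X') (hg : Continuous g) (hpg : ∀ y s, s ≤ 0 → p (g y) = f (y, s)) :
    ∃ F : Y × ℝ → X', Continuous F ∧ (∀ z, p (F z) = f z) ∧ ∀ y, F (y, 0) = g y := by
  choose N hNo hNm F hFc hFp hF0 using fun y₀ => hlp_local hp f hf hf1 g hg hpg y₀
  refine ⟨fun z => F z.1 z, ?_, fun z => hFp z.1 z.1 (hNm z.1) z.2, fun y => hF0 y y (hNm y)⟩
  rw [continuous_iff_continuousAt]
  intro z₀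
  have hcont : ∀ y₀ y, y ∈ N y₀ → Continuous fun s : ℝ => F y₀ (y, s) := by
    intro y₀ y hy
    apply (hFc y₀).comp_continuous (continuous_const.prodMk continuous_id)
    exact fun s => ⟨hy, mem_univ _⟩
  have hEq : ∀ z ∈ (N z₀.1) ×ˢ (univ : Set ℝ), F z.1 z = F z₀.1 z := by
    rintro ⟨y, s⟩ ⟨hy, -⟩
    have heq := hp.eq_of_comp_eq (hcont y y (hNm y)) (hcont z₀.1 y hy)
      (funext fun s => (hFp y y (hNm y) s).trans (hFp z₀.1 y hy s).symm) 0
      ((hF0 y y (hNm y)).trans (hF0 z₀.1 y hy).symm)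
    exact congrFun heq s
  have hCA : ContinuousAt (fun z : Y × ℝ => F z₀.1 z) z₀ :=
    (hFc z₀.1).continuousAt (((hNo z₀.1).prod isOpen_univ).mem_nhds ⟨hNm z₀.1, mem_univ _⟩)
  apply hCA.congr
  filter_upwards [((hNo z₀.1).prod isOpen_univ).mem_nhds (⟨hNm z₀.1, mem_univ _⟩ :
    z₀ ∈ (N z₀.1) ×ˢ (univ : Set ℝ))] with z hz
  exact (hEq z hz).symm

open unitInterval in
theorem pathLift (hp : IsCoveringMap p) (c : C(I, X)) (x' : X') (hx' : p x' = c 0) :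
    ∃ d : C(I, X'), (∀ τ, p (d τ) = c τ) ∧ d 0 = x' := by
  obtain ⟨F, hFc, hFp, hF0⟩ := hlp hp (fun z : Unit × ℝ => c (projIcc 0 1 zero_le_one z.2))
    (c.continuous.comp (continuous_projIcc.comp continuous_snd))
    (fun y s hs => by
      show c (projIcc 0 1 zero_le_one s) = c (projIcc 0 1 zero_le_one 1)
      rw [projIcc_of_right_le _ hs, projIcc_of_right_le _ le_rfl])
    (fun _ => x') continuous_const
    (fun y s hs => by
      show p x' = c (projIcc 0 1 zero_le_one s)
      rw [projIcc_of_le_left _ hs]; exact hx')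
  refine ⟨⟨fun τ => F ((), τ.1), hFc.comp (continuous_const.prodMk continuous_subtype_val)⟩,
    fun τ => ?_, hF0 ()⟩
  have := hFp ((), τ.1)
  rwa [projIcc_of_mem _ τ.2, Subtype.coe_eta] at this

open unitInterval in
theorem liftUnique (hp : IsCoveringMap p) (d d' : C(I, X'))
    (h : ∀ τ, p (d τ) = p (d' τ)) (h0 : d 0 = d' 0) : d = d' := by
  have := hp.eq_of_comp_eq d.continuous d'.continuous (funext h) 0 h0
  exact ContinuousMap.ext (congrFun this)

open unitInterval

theorem PathHomotopicRel.refl {X : Type*} [TopologicalSpace X] (c : C(I, X)) :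
    PathHomotopicRel c c :=
  ⟨rfl, rfl, c.comp ⟨Prod.snd, continuous_snd⟩, fun _ => rfl, fun _ => rfl,
    fun _ => rfl, fun _ => rfl⟩

theorem lift_homotopic (hp : IsCoveringMap p) (d d' : C(I, X')) (h0 : d 0 = d' 0)
    (h : PathHomotopicRel ((⟨p, hp.continuous⟩ : C(X', X)).comp d)
      ((⟨p, hp.continuous⟩ : C(X', X)).comp d')) : PathHomotopicRel d d' := by
  obtain ⟨he0, he1, H, hH0, hH1, hHs0, hHs1⟩ := h
  obtain ⟨L, hLc, hLp, hL0⟩ := hlp hp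
    (fun z : I × ℝ => H (z.1, projIcc 0 1 zero_le_one z.2))
    (H.continuous.comp (continuous_fst.prodMk (continuous_projIcc.comp continuous_snd)))
    (fun y s hs => by
      show H (y, projIcc 0 1 zero_le_one s) = H (y, projIcc 0 1 zero_le_one 1)
      rw [projIcc_of_right_le _ hs, projIcc_of_right_le _ le_rfl])
    (fun _ => d 0) continuous_const
    (fun y s hs => by
      show p (d 0) = H (y, projIcc 0 1 zero_le_one s)
      rw [projIcc_of_le_left _ hs]
      exact (hHs0 y).symm)
  -- the three uniqueness claims
  have hA : ∀ τ : I, L (0, τ.1) = d τ := by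
    have := liftUnique hp ⟨fun τ => L (0, τ.1),
        hLc.comp (continuous_const.prodMk continuous_subtype_val)⟩ d
      (fun τ => by
        show p (L (0, τ.1)) = p (d τ)
        rw [hLp (0, τ.1)]
        show H (0, projIcc 0 1 zero_le_one τ.1) = _
        rw [projIcc_of_mem _ τ.2, Subtype.coe_eta, hH0]
        rfl)
      (hL0 0)
    exact fun τ => ContinuousMap.congr_fun this τ
  have hB : ∀ τ : I, L (1, τ.1) = d' τ := by
    have := liftUnique hp ⟨fun τ => L (1, τ.1),
        hLc.comp (continuous_const.prodMk continuous_subtype_val)⟩ d'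
      (fun τ => by
        show p (L (1, τ.1)) = p (d' τ)
        rw [hLp (1, τ.1)]
        show H (1, projIcc 0 1 zero_le_one τ.1) = _
        rw [projIcc_of_mem _ τ.2, Subtype.coe_eta, hH1]
        rfl)
      (by show L (1, (0:I).1) = d' 0; rw [show ((0:I).1) = (0:ℝ) from rfl, hL0 1, h0])
    exact fun τ => ContinuousMap.congr_fun this τ
  have hC : ∀ sg : I, L (sg, 1) = L (0, 1) := by
    have := liftUnique hp ⟨fun sg : I => L (sg, (1:ℝ)),
        hLc.comp (continuous_id.prodMk continuous_const)⟩
      (ContinuousMap.const I (L (0, (1:ℝ))))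
      (fun sg => by
        show p (L (sg, (1:ℝ))) = p (L (0, (1:ℝ)))
        rw [hLp (sg, 1), hLp (0, 1)]
        show H (sg, projIcc 0 1 zero_le_one 1) = H (0, projIcc 0 1 zero_le_one 1)
        rw [projIcc_of_right_le _ le_rfl]
        rw [show ((⟨1, right_mem_Icc.2 zero_le_one⟩ : I)) = (1:I) from rfl, hHs1, hHs1])
      rfl
    exact fun sg => ContinuousMap.congr_fun this sg
  have hd1 : d 1 = d' 1 := by
    have h1 : L (0, (1:ℝ)) = d 1 := by
      have := hA 1; rwa [show ((1:I).1) = (1:ℝ) from rfl] at this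
    have h2 : L (1, (1:ℝ)) = d' 1 := by
      have := hB 1; rwa [show ((1:I).1) = (1:ℝ) from rfl] at this
    rw [← h1, ← h2, hC 1]
  refine ⟨h0, hd1, ⟨fun z => L (z.1, z.2.1), hLc.comp
    (continuous_fst.prodMk (continuous_subtype_val.comp continuous_snd))⟩, ?_, ?_, ?_, ?_⟩
  · exact hA
  · exact hB
  · intro s
    show L (s, (0:I).1) = d 0
    rw [show ((0:I).1) = (0:ℝ) from rfl, hL0 s]
  · intro s
    show L (s, (1:I).1) = d 1
    rw [show ((1:I).1) = (1:ℝ) from rfl, hC s]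
    have := hA 1; rwa [show ((1:I).1) = (1:ℝ) from rfl] at this

theorem continuous_startEndMap {X : Type*} [TopologicalSpace X] :
    Continuous (startEndMap (X := X)) := by
  rw [isQuotientMap_quot_mk.continuous_iff]
  show Continuous fun c : C(I, X) => (c 0, c 1)
  exact (continuous_eval_const 0).prodMk (continuous_eval_const 1)

theorem continuous_pushQuot {X Y : Type*} [TopologicalSpace X] [TopologicalSpace Y] (f : C(X, Y)) :
    Continuous (pushQuot f) := by
  rw [isQuotientMap_quot_mk.continuous_iff]
  show Continuous fun c : C(I, X) => Quot.mk _ (f.comp c)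
  exact continuous_quot_mk.comp (f.continuous_postcomp)

open scoped Classical in
/-- A choice of lift of a path with prescribed starting point. -/
noncomputable def liftCM (p : X' → X) (x' : X') (c : C(I, X)) : C(I, X') :=
  if h : ∃ d : C(I, X'), (∀ τ, p (d τ) = c τ) ∧ d 0 = x' then h.choose
  else ContinuousMap.const I x'

theorem liftCM_spec (hp : IsCoveringMap p) (c : C(I, X)) (x' : X') (hx' : p x' = c 0) :
    (∀ τ, p ((liftCM p x' c) τ) = c τ) ∧ (liftCM p x' c) 0 = x' := by
  have h := pathLift hp c x' hx'
  rw [liftCM]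
  rw [dif_pos h]
  exact h.choose_spec

theorem liftFun_wd (hp : IsCoveringMap p) {Z : Type*} [TopologicalSpace Z]
    (t : Bundle.Trivialization Z p) (i : Z) (c₁ c₂ : C(I, X)) (h : PathHomotopicRel c₁ c₂) :
    Quot.mk (PathHomotopicRel (X := X')) (liftCM p (t.toOpenPartialHomeomorph.symm (c₁ 0, i)) c₁)
      = Quot.mk (PathHomotopicRel (X := X'))
        (liftCM p (t.toOpenPartialHomeomorph.symm (c₂ 0, i)) c₂) := by
  have h00 : c₂ 0 = c₁ 0 := h.1.symm
  rw [h00]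
  set x' := t.toOpenPartialHomeomorph.symm (c₁ 0, i) with hx'
  by_cases hpx : p x' = c₁ 0
  · obtain ⟨hs1, hs1'⟩ := liftCM_spec hp c₁ x' hpx
    obtain ⟨hs2, hs2'⟩ := liftCM_spec hp c₂ x' (by rw [hpx, ← h00])
    apply Quot.sound
    apply lift_homotopic hp _ _ (by rw [hs1', hs2'])
    have e1 : (⟨p, hp.continuous⟩ : C(X', X)).comp (liftCM p x' c₁) = c₁ :=
      ContinuousMap.ext hs1
    have e2 : (⟨p, hp.continuous⟩ : C(X', X)).comp (liftCM p x' c₂) = c₂ :=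
      ContinuousMap.ext hs2
    rw [e1, e2]
    exact h
  · have h1 : ¬ ∃ d : C(I, X'), (∀ τ, p (d τ) = c₁ τ) ∧ d 0 = x' := by
      rintro ⟨d, hd, hd0⟩
      exact hpx (by rw [← hd0, hd 0])
    have h2 : ¬ ∃ d : C(I, X'), (∀ τ, p (d τ) = c₂ τ) ∧ d 0 = x' := by
      rintro ⟨d, hd, hd0⟩
      exact hpx (by rw [← hd0, hd 0, h00])
    rw [liftCM, dif_neg h1, liftCM, dif_neg h2]

theorem liftQuot_contOn (hp : IsCoveringMap p) {Z : Type*} [TopologicalSpace Z]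
    (t : Bundle.Trivialization Z p) (i : Z) :
    ContinuousOn (Quot.lift
        (fun c' => Quot.mk (PathHomotopicRel (X := X'))
          (liftCM p (t.toOpenPartialHomeomorph.symm (c' 0, i)) c'))
        (liftFun_wd hp t i))
      {v : FundGroupoidSpace X | (startEndMap v).1 ∈ t.baseSet} := by
  set W : Set C(I, X) := {c' | c' 0 ∈ t.baseSet} with hWdef
  have hW : IsOpen W := t.open_baseSet.preimage (continuous_eval_const 0)
  obtain ⟨L, hLc, hLp, hL0⟩ := hlp hp
    (fun z : ↥W × ℝ => z.1.1 (projIcc 0 1 zero_le_one z.2))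
    (by
      have h1 : Continuous fun z : ↥W × ℝ => ((z.1 : C(I, X)), projIcc 0 1 zero_le_one z.2) :=
        (continuous_subtype_val.comp continuous_fst).prodMk
          (continuous_projIcc.comp continuous_snd)
      exact continuous_eval.comp h1)
    (fun y s hs => by
      show y.1 (projIcc 0 1 zero_le_one s) = y.1 (projIcc 0 1 zero_le_one 1)
      rw [projIcc_of_right_le _ hs, projIcc_of_right_le _ le_rfl])
    (fun w => t.toOpenPartialHomeomorph.symm (w.1 0, i))
    (by
      apply ContinuousOn.comp_continuous t.toOpenPartialHomeomorph.symm.continuousOn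
        (((continuous_eval_const 0).comp continuous_subtype_val).prodMk continuous_const)
      intro w
      rw [OpenPartialHomeomorph.symm_source]
      exact t.mem_target.2 w.2)
    (fun w s hs => by
      show p (t.toOpenPartialHomeomorph.symm (w.1 0, i)) = w.1 (projIcc 0 1 zero_le_one s)
      rw [projIcc_of_le_left _ hs]
      exact t.proj_symm_apply' w.2)
  set M : C(↥W × I, X') := ⟨fun z => L (z.1, z.2.1),
    hLc.comp (continuous_fst.prodMk (continuous_subtype_val.comp continuous_snd))⟩ with hM
  have hid : ∀ w : ↥W, liftCM p (t.toOpenPartialHomeomorph.symm (w.1 0, i)) w.1 = M.curry w := by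
    intro w
    have hx' : p (t.toOpenPartialHomeomorph.symm (w.1 0, i)) = w.1 0 := t.proj_symm_apply' w.2
    obtain ⟨hs, hs0⟩ := liftCM_spec hp w.1 _ hx'
    apply liftUnique hp
    · intro τ
      rw [hs τ]
      show _ = p (L (w, τ.1))
      rw [hLp (w, τ.1)]
      show w.1 τ = w.1 (projIcc 0 1 zero_le_one τ.1)
      rw [projIcc_of_mem _ τ.2, Subtype.coe_eta]
    · rw [hs0]
      show _ = L (w, (0:I).1)
      rw [show ((0:I).1) = (0:ℝ) from rfl, hL0 w]
  have hΦ : ContinuousOn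
      (fun c' : C(I, X) => Quot.mk (PathHomotopicRel (X := X'))
        (liftCM p (t.toOpenPartialHomeomorph.symm (c' 0, i)) c')) W := by
    rw [continuousOn_iff_continuous_restrict]
    have : Set.domRestrict W (fun c' : C(I, X) => Quot.mk (PathHomotopicRel (X := X'))
        (liftCM p (t.toOpenPartialHomeomorph.symm (c' 0, i)) c'))
        = fun w : ↥W => Quot.mk (PathHomotopicRel (X := X')) (M.curry w) := by
      funext w
      rw [Set.domRestrict_apply, hid w]
    rw [this]
    exact continuous_quot_mk.comp M.curry.continuous
  rw [_root_.continuousOn_iff']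
  intro O hO
  refine ⟨(Quot.lift
      (fun c' => Quot.mk (PathHomotopicRel (X := X'))
        (liftCM p (t.toOpenPartialHomeomorph.symm (c' 0, i)) c'))
      (liftFun_wd hp t i)) ⁻¹' O ∩ {v : FundGroupoidSpace X | (startEndMap v).1 ∈ t.baseSet},
    ?_, by rw [Set.inter_assoc, Set.inter_self]⟩
  rw [← isQuotientMap_quot_mk.isOpen_preimage, Set.preimage_inter]
  have hpre1 : Quot.mk (PathHomotopicRel (X := X)) ⁻¹'
      ((Quot.lift (fun c' => Quot.mk (PathHomotopicRel (X := X'))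
        (liftCM p (t.toOpenPartialHomeomorph.symm (c' 0, i)) c')) (liftFun_wd hp t i)) ⁻¹' O)
      = (fun c' : C(I, X) => Quot.mk (PathHomotopicRel (X := X'))
        (liftCM p (t.toOpenPartialHomeomorph.symm (c' 0, i)) c')) ⁻¹' O := rfl
  have hpre2 : Quot.mk (PathHomotopicRel (X := X)) ⁻¹'
      {v : FundGroupoidSpace X | (startEndMap v).1 ∈ t.baseSet} = W := rfl
  rw [hpre1, hpre2, Set.inter_comm]
  exact hΦ.isOpen_inter_preimage hW hO

end Aux

theorem stmt16 {X X' : Type*} [TopologicalSpace X] [TopologicalSpace X']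
    [PathConnectedSpace X] [LocallyPathConnectedSpace X]
    (p : X' → X) (hp : IsCoveringMap p) [SimplyConnectedSpace X'] :
    IsCoveringMap (pushQuot ⟨p, hp.continuous⟩) := by
  intro v₀
  induction v₀ using Quot.ind with
  | _ c =>
  have hc0 : c 0 ∈ Set.range p := by
    obtain ⟨x'⟩ := (inferInstance : Nonempty X')
    have hu := (isClopen_iff.mp ⟨range_isClosed_of_cov hp, hp.isOpenMap.isOpen_range⟩).resolve_left
      (Set.nonempty_iff_ne_empty.mp ⟨p x', x', rfl⟩)
    rw [hu]; exact Set.mem_univ _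
  obtain ⟨x₀', hx₀'⟩ := hc0
  haveI : Nonempty (p ⁻¹' {c 0}) := ⟨⟨x₀', hx₀'⟩⟩
  haveI hdisc := (hp (c 0)).discreteTopology_fiber
  set t := (hp (c 0)).toTrivialization with ht
  have hx₀U := (hp (c 0)).mem_toTrivialization_baseSet
  set pc : C(X', X) := ⟨p, hp.continuous⟩ with hpc
  have hqc : Continuous (pushQuot pc) := continuous_pushQuot pc
  set V : Set (FundGroupoidSpace X) := {v | (startEndMap v).1 ∈ t.baseSet} with hV
  have hVopen : IsOpen V := t.open_baseSet.preimage (continuous_fst.comp continuous_startEndMap)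
  refine IsEvenlyCovered.to_isEvenlyCovered_preimage
    (show IsEvenlyCovered (pushQuot pc) (Quot.mk _ c) ↥(p ⁻¹' {c 0}) from IsEvenlyCovered.of_trivialization (t := ?_) ?_)
  · refine ⟨⟨⟨⟨fun u => (pushQuot pc u, (t ((startEndMap u).1)).2),
      fun z => Quot.lift (fun c' => Quot.mk (PathHomotopicRel (X := X'))
        (liftCM p (t.toOpenPartialHomeomorph.symm (c' 0, z.2)) c')) (liftFun_wd hp t z.2) z.1,
      pushQuot pc ⁻¹' V, V ×ˢ Set.univ,
      ?_, ?_, ?_, ?_⟩, ?_, ?_⟩, ?_, ?_⟩, V, hVopen, rfl, rfl, fun u hu => rfl⟩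
    rotate_left 4; pick_goal 4; pick_goal 4; rotate_left 4
    -- map_source'
    · exact fun u hu => ⟨hu, trivial⟩
    -- map_target'
    · rintro ⟨v, i⟩ hz
      induction v using Quot.ind with
      | _ c' =>
      have hz1 : c' 0 ∈ t.baseSet := hz.1
      obtain ⟨hs, hs0⟩ := liftCM_spec hp c' (t.toOpenPartialHomeomorph.symm (c' 0, i))
        (t.proj_symm_apply' hz1)
      have h1 : pc.comp (liftCM p (t.toOpenPartialHomeomorph.symm (c' 0, i)) c') = c' :=
        ContinuousMap.ext hs
      show Quot.mk _ (pc.comp (liftCM p (t.toOpenPartialHomeomorph.symm (c' 0, i)) c')) ∈ V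
      rw [h1]
      exact hz1
    -- left_inv'
    · intro u hu
      induction u using Quot.ind with
      | _ d =>
      have hd0 : p (d 0) ∈ t.baseSet := hu
      show Quot.mk _ (liftCM p
          (t.toOpenPartialHomeomorph.symm (p (d 0), (t (d 0)).2)) (pc.comp d)) = Quot.mk _ d
      have hstart : t.toOpenPartialHomeomorph.symm (p (d 0), (t (d 0)).2) = d 0 := by
        rw [show ((p (d 0), (t (d 0)).2) : X × ↥(p ⁻¹' {c 0})) = t (d 0) from Prod.ext (t.coe_fst' hd0).symm rfl]
        exact t.toOpenPartialHomeomorph.left_inv (t.mem_source.2 hd0)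
      have hlift : liftCM p (d 0) (pc.comp d) = d := by
        obtain ⟨hs, hs0⟩ := liftCM_spec hp (pc.comp d) (d 0) rfl
        exact liftUnique hp _ _ (fun τ => by rw [hs τ]; rfl) hs0
      rw [hstart, hlift]
    -- right_inv'
    · rintro ⟨v, i⟩ hz
      induction v using Quot.ind with
      | _ c' =>
      have hz1 : c' 0 ∈ t.baseSet := hz.1
      obtain ⟨hs, hs0⟩ := liftCM_spec hp c' (t.toOpenPartialHomeomorph.symm (c' 0, i))
        (t.proj_symm_apply' hz1)
      have h1 : pc.comp (liftCM p (t.toOpenPartialHomeomorph.symm (c' 0, i)) c') = c' :=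
        ContinuousMap.ext hs
      have h2 : (t ((liftCM p (t.toOpenPartialHomeomorph.symm (c' 0, i)) c') 0)).2 = i := by
        rw [hs0, ← t.coe_coe, t.toOpenPartialHomeomorph.right_inv (t.mem_target.2 hz1)]
      show (Quot.mk _ (pc.comp (liftCM p (t.toOpenPartialHomeomorph.symm (c' 0, i)) c')),
        (t ((liftCM p (t.toOpenPartialHomeomorph.symm (c' 0, i)) c') 0)).2) = (Quot.mk _ c', i)
      rw [h1, h2]
    -- open_source
    · exact hVopen.preimage hqc
    -- open_target
    · exact hVopen.prod isOpen_univ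
    -- continuousOn_toFun
    · apply ContinuousOn.prodMk hqc.continuousOn
      apply continuous_snd.comp_continuousOn
      apply t.toOpenPartialHomeomorph.continuousOn.comp
        (continuous_fst.comp continuous_startEndMap).continuousOn
      intro u hu
      induction u using Quot.ind with
      | _ d =>
      exact t.mem_source.2 hu
    -- continuousOn_invFun
    · intro z hz
      apply ContinuousAt.continuousWithinAt
      have h1 : ContinuousAt (fun z' : FundGroupoidSpace X × ↥(p ⁻¹' {c 0}) =>
          Quot.lift (fun c' => Quot.mk (PathHomotopicRel (X := X'))
            (liftCM p (t.toOpenPartialHomeomorph.symm (c' 0, z.2)) c'))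
            (liftFun_wd hp t z.2) z'.1) z :=
        ContinuousAt.comp ((liftQuot_contOn hp t z.2).continuousAt
          (hVopen.mem_nhds hz.1)) continuous_fst.continuousAt
      apply h1.congr
      have hnb : (Set.univ ×ˢ ({z.2} : Set ↥(p ⁻¹' {c 0}))) ∈ nhds z :=
        (isOpen_univ.prod (isOpen_discrete _)).mem_nhds ⟨trivial, rfl⟩
      filter_upwards [hnb] with z' hz'
      have h2 : z'.2 = z.2 := hz'.2
      rw [h2]
    -- membership in baseSet
  · exact hx₀U
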